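/- The Wilson score interval endpoints are monotone in the success count: for fixed n and z > 0, if k₁ ≤ k₂ then both the lower and upper Wilson endpoints computed at k₁ are at most the corresponding endpoints at k₂. -/
import Mathlib


/-- Lower Wilson endpoint for k successes in n trials with parameter z. -/
noncomputable def wilsonL (n : ℕ) (z : ℝ) (k : ℕ) : ℝ :=
  (2 * k + z ^ 2 - z * Real.sqrt (z ^ 2 + 4 * k * ((n : ℝ) - k) / n)) /
    (2 * ((n : ℝ) + z ^ 2))

/-- Upper Wilson endpoint for k successes in n trials with parameter z. -/
noncomputable def wilsonU (n : ℕ) (z : ℝ) (k : ℕ) : ℝ :=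
  (2 * k + z ^ 2 + z * Real.sqrt (z ^ 2 + 4 * k * ((n : ℝ) - k) / n)) /
    (2 * ((n : ℝ) + z ^ 2))

/-- Both Wilson endpoints are nondecreasing in the success count k on {0,…,n}. -/
theorem stmt_11 (n : ℕ) (hn : 0 < n) (z : ℝ) (hz : 0 < z)
    (k₁ k₂ : ℕ) (h12 : k₁ ≤ k₂) (h2n : k₂ ≤ n) :
    wilsonL n z k₁ ≤ wilsonL n z k₂ ∧ wilsonU n z k₁ ≤ wilsonU n z k₂ := by
  have hnR : (0 : ℝ) < n := by exact_mod_cast hn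
  have h1n : k₁ ≤ n := le_trans h12 h2n
  have hk1 : (k₁ : ℝ) ≤ n := by exact_mod_cast h1n
  have hk2 : (k₂ : ℝ) ≤ n := by exact_mod_cast h2n
  have hk12 : (k₁ : ℝ) ≤ k₂ := by exact_mod_cast h12
  have ha : ∃ a : ℝ, a = z ^ 2 + 4 * k₁ * ((n : ℝ) - k₁) / n := ⟨_, rfl⟩
  obtain ⟨a, ha⟩ := ha
  have hb : ∃ b : ℝ, b = z ^ 2 + 4 * k₂ * ((n : ℝ) - k₂) / n := ⟨_, rfl⟩
  obtain ⟨b, hb⟩ := hb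
  have ha0 : z ^ 2 ≤ a := by
    rw [ha]
    have : 0 ≤ 4 * (k₁ : ℝ) * ((n : ℝ) - k₁) / n :=
      div_nonneg (by nlinarith) hnR.le
    linarith
  have hb0 : z ^ 2 ≤ b := by
    rw [hb]
    have : 0 ≤ 4 * (k₂ : ℝ) * ((n : ℝ) - k₂) / n :=
      div_nonneg (by nlinarith) hnR.le
    linarith
  have haa : 0 ≤ a := le_trans (by positivity) ha0
  have hbb : 0 ≤ b := le_trans (by positivity) hb0
  have hs1 : ∃ s₁ : ℝ, s₁ = Real.sqrt a := ⟨_, rfl⟩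
  obtain ⟨s₁, hs1⟩ := hs1
  have hs2 : ∃ s₂ : ℝ, s₂ = Real.sqrt b := ⟨_, rfl⟩
  obtain ⟨s₂, hs2⟩ := hs2
  have hzs1 : z ≤ s₁ := by
    rw [hs1, show z = Real.sqrt (z ^ 2) from (Real.sqrt_sq hz.le).symm]
    exact Real.sqrt_le_sqrt ha0
  have hzs2 : z ≤ s₂ := by
    rw [hs2, show z = Real.sqrt (z ^ 2) from (Real.sqrt_sq hz.le).symm]
    exact Real.sqrt_le_sqrt hb0
  have hsq1 : s₁ ^ 2 = a := by rw [hs1]; exact Real.sq_sqrt haa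
  have hsq2 : s₂ ^ 2 = b := by rw [hs2]; exact Real.sq_sqrt hbb
  -- |b - a| ≤ 4 (k₂ - k₁)
  have hdiff : b - a = 4 * ((k₂ : ℝ) - k₁) * (n - (k₁ + k₂)) / n := by
    rw [ha, hb]; field_simp; ring
  have habs : |b - a| ≤ 4 * ((k₂ : ℝ) - k₁) := by
    rw [hdiff, abs_div, abs_of_pos hnR, div_le_iff₀ hnR]
    rw [abs_mul, abs_of_nonneg (by linarith : (0:ℝ) ≤ 4 * ((k₂ : ℝ) - k₁))]
    have h1 : |(n : ℝ) - (k₁ + k₂)| ≤ n := by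
      rw [abs_le]
      constructor <;> [linarith [Nat.cast_nonneg (α := ℝ) k₁, Nat.cast_nonneg (α := ℝ) k₂]; linarith [Nat.cast_nonneg (α := ℝ) k₁, Nat.cast_nonneg (α := ℝ) k₂]]
    calc 4 * ((k₂ : ℝ) - k₁) * |(n : ℝ) - (k₁ + k₂)|
        ≤ 4 * ((k₂ : ℝ) - k₁) * n := by
          apply mul_le_mul_of_nonneg_left h1 (by linarith)
      _ = 4 * ((k₂ : ℝ) - k₁) * n := rfl
  -- key : z * |s₂ - s₁| ≤ 2 (k₂ - k₁)
  have hsum : (s₁ + s₂) * |s₂ - s₁| = |b - a| := by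
    rw [← abs_of_nonneg (by linarith : (0:ℝ) ≤ s₁ + s₂), ← abs_mul]
    congr 1
    have : (s₁ + s₂) * (s₂ - s₁) = s₂ ^ 2 - s₁ ^ 2 := by ring
    rw [this, hsq1, hsq2]
  have key : z * |s₂ - s₁| ≤ 2 * ((k₂ : ℝ) - k₁) := by
    have h2z : 2 * z * |s₂ - s₁| ≤ (s₁ + s₂) * |s₂ - s₁| := by
      apply mul_le_mul_of_nonneg_right (by linarith) (abs_nonneg _)
    rw [hsum] at h2z
    linarith [habs]
  have habs1 : s₂ - s₁ ≤ |s₂ - s₁| := le_abs_self _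
  have habs2 : s₁ - s₂ ≤ |s₂ - s₁| := by
    have := neg_abs_le (s₂ - s₁); linarith
  have hmul1 : z * (s₂ - s₁) ≤ 2 * ((k₂ : ℝ) - k₁) :=
    le_trans (mul_le_mul_of_nonneg_left habs1 hz.le) key
  have hmul2 : z * (s₁ - s₂) ≤ 2 * ((k₂ : ℝ) - k₁) :=
    le_trans (mul_le_mul_of_nonneg_left habs2 hz.le) key
  have hden : (0 : ℝ) < 2 * ((n : ℝ) + z ^ 2) := by positivity
  constructor
  · unfold wilsonL
    rw [← ha, ← hb, ← hs1, ← hs2, div_le_div_iff_of_pos_right hden]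
    linarith [hmul1]
  · unfold wilsonU
    rw [← ha, ← hb, ← hs1, ← hs2, div_le_div_iff_of_pos_right hden]
    linarith [hmul2]
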